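/- Let α ∈ ℂ, y ∈ [−1,1], and define r_i(z,y) = ∫_{−1}^{y} e^{z(y−x)} P_i(x) dx. Then for i ≥ 1, r_{i+1}(z,y) = ((2i+1)/z) r_i(z,y) + r_{i−1}(z,y) − (1/z)(P_{i+1}(y) − P_{i−1}(y)), with r₀(z,y) = (e^{z(1+y)} − 1)/z and r₁(z,y) = (e^{z(1+y)}(1 − z) − (1 + zy))/z² for z ≠ 0. -/

import Mathlib

open Complex Polynomial

lemma iter_add (k : ℕ) (p q : ℝ[X]) :
    derivative^[k] (p + q) = derivative^[k] p + derivative^[k] q := by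
  induction k generalizing p q with
  | zero => simp
  | succ k ih => simp [Function.iterate_succ_apply, *]

lemma iter_deriv_X_mul (k : ℕ) (p : ℝ[X]) :
    derivative^[k+1] (X * p) =
      X * derivative^[k+1] p + C (((k:ℕ):ℝ)+1) * derivative^[k] p := by
  induction k generalizing p with
  | zero => simp [derivative_mul]; ring
  | succ k ih =>
    have h2 : derivative (X * p) = X * derivative p + p := by
      simp [derivative_mul]; ring
    have e1 : derivative^[k+1+1] (X * p) = derivative^[k+1] (X * derivative p + p) := by
      rw [Function.iterate_succ_apply, h2]
    have e2 : derivative^[k+1] (X * derivative p) =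
        X * derivative^[k+1+1] p + C (((k:ℕ):ℝ)+1) * derivative^[k+1] p := by
      rw [ih (derivative p), ← Function.iterate_succ_apply, ← Function.iterate_succ_apply]
    rw [e1, iter_add, e2]
    have : (((k+1:ℕ):ℝ)) + 1 = (((k:ℕ):ℝ) + 1) + 1 := by push_cast; ring
    rw [this]; simp only [map_add, map_one]
    ring

lemma iter_deriv_sq_mul (k : ℕ) (p : ℝ[X]) :
    derivative^[k+2] ((X^2 - 1) * p) =
      (X^2 - 1) * derivative^[k+2] p
      + C (2*(((k:ℕ):ℝ)+2)) * (X * derivative^[k+1] p)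
      + C ((((k:ℕ):ℝ)+2)*(((k:ℕ):ℝ)+1)) * derivative^[k] p := by
  induction k generalizing p with
  | zero =>
    have h1 : derivative ((X^2-1) * p) = (X^2-1) * derivative p + C 2 * (X * p) := by
      simp [derivative_mul, map_ofNat]; ring
    show derivative (derivative ((X^2-1)*p)) = _
    rw [h1]
    have h3 : derivative ((X^2-1) * derivative p + C 2 * (X*p)) =
        (X^2-1)*derivative^[2] p + C 4 * (X * derivative p) + C 2 * p := by
      simp [derivative_mul, Function.iterate_succ_apply', map_ofNat]
      ring
    rw [h3]; norm_num
  | succ k ih =>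
    have h2 : derivative ((X^2-1) * p) = (X^2-1) * derivative p + C 2 * (X * p) := by
      simp [derivative_mul, map_ofNat]; ring
    have e1 : derivative^[k+1+2] ((X^2-1) * p)
        = derivative^[k+2] ((X^2-1) * derivative p) + C 2 * derivative^[k+2] (X * p) := by
      rw [Function.iterate_succ_apply, h2, iter_add, iterate_derivative_C_mul]
    rw [e1, ih (derivative p), iter_deriv_X_mul (k+1) p]
    rw [← Function.iterate_succ_apply, ← Function.iterate_succ_apply, ← Function.iterate_succ_apply]
    have c1 : ((k+1:ℕ):ℝ) = ((k:ℕ):ℝ)+1 := by push_cast; ring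
    rw [c1]
    simp only [map_add, map_one, map_mul, map_ofNat]
    ring

/-- The i-th Legendre polynomial, via the Rodrigues formula
P_i(x) = (1/(2^i i!)) dⁱ/dxⁱ (x² − 1)ⁱ. -/
noncomputable def legendrePoly (i : ℕ) : Polynomial ℝ :=
  Polynomial.C (1 / (2 ^ i * (i.factorial : ℝ))) *
    (Polynomial.derivative^[i] ((Polynomial.X ^ 2 - 1) ^ i))

lemma cfact (m : ℕ) :
    (1 / (2 ^ (m+1) * ((m+1).factorial : ℝ))) * (2*(((m:ℕ):ℝ)+1)) =
    1 / (2 ^ m * (m.factorial : ℝ)) := by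
  have h1 : (m.factorial : ℝ) ≠ 0 := Nat.cast_ne_zero.2 m.factorial_ne_zero
  have h2 : (2:ℝ)^m ≠ 0 := by positivity
  rw [Nat.factorial_succ]
  push_cast
  field_simp
  ring

lemma derivf (m : ℕ) :
    derivative ((X^2 - 1 : ℝ[X])^(m+1)) = C (2*(((m:ℕ):ℝ)+1)) * (X * (X^2-1)^m) := by
  rw [derivative_pow]
  simp [map_ofNat]
  ring

lemma lemA (n : ℕ) :
    derivative (legendrePoly (n+1)) =
      X * derivative (legendrePoly n) + C (((n:ℕ):ℝ)+1) * legendrePoly n := by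
  unfold legendrePoly
  rw [derivative_C_mul, derivative_C_mul,
    ← Function.iterate_succ_apply' derivative (n+1), Function.iterate_succ_apply derivative (n+1),
    derivf, iterate_derivative_C_mul, iter_deriv_X_mul n,
    ← Function.iterate_succ_apply' derivative n]
  simp only [Nat.succ_eq_add_one]
  rw [show (1 / (2 ^ n * (n.factorial:ℝ)))
      = (1 / (2 ^ (n+1) * ((n+1).factorial : ℝ))) * (2*(((n:ℕ):ℝ)+1)) from (cfact n).symm]
  simp only [map_mul]
  ring

lemma const_of_deriv_zero {p : ℝ[X]} (h : derivative p = 0) (h1 : p.eval 1 = 0) : p = 0 := by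
  have hd := natDegree_eq_zero_of_derivative_eq_zero h
  obtain ⟨c, rfl⟩ := natDegree_eq_zero.mp hd
  simpa using h1

lemma eval_one_iter_deriv (k : ℕ) :
    (derivative^[k] ((X^2-1:ℝ[X])^(k+1))).eval 1 = 0 := by
  have hdvd : (X - C (1:ℝ)) ^ (k + 1) ∣ (X^2-1:ℝ[X])^(k+1) := by
    apply pow_dvd_pow_of_dvd
    have : (X^2 - 1 : ℝ[X]) = (X - C 1) * (X + C 1) := by
      simp; ring
    rw [this]; exact dvd_mul_right _ _
  have h2 : (X - C (1:ℝ)) ^ (k + 1 - k) ∣ derivative^[k] ((X^2-1:ℝ[X])^(k+1)) :=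
    pow_sub_dvd_iterate_derivative_of_pow_dvd k hdvd
  rw [Nat.add_sub_cancel_left, pow_one] at h2
  obtain ⟨q, hq⟩ := h2
  simp [hq]

lemma eval_negone_iter_deriv (k : ℕ) :
    (derivative^[k] ((X^2-1:ℝ[X])^(k+1))).eval (-1) = 0 := by
  have hdvd : (X - C (-1:ℝ)) ^ (k + 1) ∣ (X^2-1:ℝ[X])^(k+1) := by
    apply pow_dvd_pow_of_dvd
    have : (X^2 - 1 : ℝ[X]) = (X - C (-1)) * (X - C 1) := by
      simp; ring
    rw [this]; exact dvd_mul_right _ _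
  have h2 : (X - C (-1:ℝ)) ^ (k + 1 - k) ∣ derivative^[k] ((X^2-1:ℝ[X])^(k+1)) :=
    pow_sub_dvd_iterate_derivative_of_pow_dvd k hdvd
  rw [Nat.add_sub_cancel_left, pow_one] at h2
  obtain ⟨q, hq⟩ := h2
  simp [hq]

lemma lemC (k : ℕ) :
    (X^2-1 : ℝ[X]) * derivative^[k+2] ((X^2-1)^(k+1)) =
      C ((((k:ℕ):ℝ)+1)*(((k:ℕ):ℝ)+2)) * derivative^[k] ((X^2-1)^(k+1)) := by
  set f : ℝ[X] := (X^2-1)^(k+1) with hf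
  -- differentiated pre-identity
  have base : (X^2-1 : ℝ[X]) * derivative f = C (2*(((k:ℕ):ℝ)+1)) * (X * f) := by
    rw [hf, derivf]; ring
  have main : (X^2-1 : ℝ[X]) * derivative^[k+3] f + C 2 * (X * derivative^[k+2] f) =
      C ((((k:ℕ):ℝ)+1)*(((k:ℕ):ℝ)+2)) * derivative^[k+1] f := by
    have e1 := congrArg (derivative^[k+2]) base
    rw [iter_deriv_sq_mul k (derivative f), iterate_derivative_C_mul,
      iter_deriv_X_mul (k+1) f] at e1
    rw [← Function.iterate_succ_apply, ← Function.iterate_succ_apply,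
      ← Function.iterate_succ_apply] at e1
    have e2 : (X^2-1 : ℝ[X]) * derivative^[k+3] f =
        C (2*(((k:ℕ):ℝ)+1)) * (X * derivative^[k+2] f)
        + C (2*(((k:ℕ):ℝ)+1)) * (C (((k:ℕ):ℝ)+1+1) * derivative^[k+1] f)
        - C (2*(((k:ℕ):ℝ)+2)) * (X * derivative^[k+2] f)
        - C ((((k:ℕ):ℝ)+2)*(((k:ℕ):ℝ)+1)) * derivative^[k+1] f := by
      have hcast : ((k+1:ℕ):ℝ) = ((k:ℕ):ℝ)+1 := by push_cast; ring
      rw [hcast] at e1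
      linear_combination e1
    rw [e2]
    simp only [Nat.cast_add, Nat.cast_one, map_mul, map_add, map_one, map_ofNat]
    ring
  set L : ℝ[X] := (X^2-1) * derivative^[k+2] f
      - C ((((k:ℕ):ℝ)+1)*(((k:ℕ):ℝ)+2)) * derivative^[k] f with hL
  have hdL : derivative L = 0 := by
    rw [hL]
    rw [derivative_sub, derivative_mul, derivative_C_mul,
      ← Function.iterate_succ_apply' derivative (k+2), ← Function.iterate_succ_apply' derivative k]
    have : derivative (X^2 - 1 : ℝ[X]) = C 2 * X := by
      simp [map_ofNat]; norm_num
    rw [this]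
    linear_combination main
  have hL1 : L.eval 1 = 0 := by
    rw [hL]
    simp [hf, eval_one_iter_deriv k]
  have := const_of_deriv_zero hdL hL1
  rw [hL] at this
  linear_combination this

lemma legendre0 : legendrePoly 0 = 1 := by
  unfold legendrePoly; simp

lemma legendre1 : legendrePoly 1 = X := by
  unfold legendrePoly
  simp [Nat.factorial, derivative_pow, map_ofNat]
  rw [show ((2:ℝ[X]) * X) = C 2 * X by rw [map_ofNat], ← mul_assoc, ← map_mul]
  norm_num

lemma lemStar (k : ℕ) :
    legendrePoly (k+2) = X * legendrePoly (k+1)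
      + C ((((k:ℕ):ℝ)+1) * (1/(2^(k+1) * ((k+1).factorial:ℝ)))) *
        derivative^[k] ((X^2-1)^(k+1)) := by
  unfold legendrePoly
  rw [show k+2 = (k+1)+1 from rfl, Function.iterate_succ_apply derivative (k+1),
    derivf (k+1), iterate_derivative_C_mul, iter_deriv_X_mul k]
  have hc := cfact (k+1)
  have hcast : ((k+1:ℕ):ℝ) = ((k:ℕ):ℝ)+1 := by push_cast; ring
  rw [hcast] at hc
  rw [show (1 / (2 ^ (k+1) * ((k+1).factorial:ℝ)))
      = (1 / (2 ^ (k+1+1) * ((k+1+1).factorial : ℝ))) * (2*((((k:ℕ):ℝ)+1)+1)) from hc.symm]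
  simp only [Nat.cast_add, Nat.cast_one, map_mul, map_add, map_one, map_ofNat]
  ring

lemma h4aux (k : ℕ) : derivative (legendrePoly (k+1)) =
    C (1/(2^(k+1) * ((k+1).factorial:ℝ))) * derivative^[k+2] ((X^2-1)^(k+1)) := by
  unfold legendrePoly
  rw [derivative_C_mul, ← Function.iterate_succ_apply' derivative (k+1)]

lemma lemB (k : ℕ) :
    derivative (legendrePoly (k+1)) =
      X * derivative (legendrePoly (k+2)) - C (((k:ℕ):ℝ)+2) * legendrePoly (k+2) := by
  have h1 := lemA (k+1)
  have h2 := lemStar k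
  have h3 := lemC k
  have h4 := h4aux k
  have hcast : ((k+1:ℕ):ℝ) = ((k:ℕ):ℝ)+1 := by push_cast; ring
  rw [hcast] at h1
  simp only [Nat.cast_add, Nat.cast_one, map_mul, map_add, map_one, map_ofNat] at h1 h2 h3 h4 ⊢
  linear_combination (-X) * h1 + (C ((k:ℕ):ℝ) + 2) * h2 + (1 - X^2) * h4
    + (- C (1/(2^(k+1) * ((k+1).factorial:ℝ)))) * h3

lemma lemB' (j : ℕ) :
    derivative (legendrePoly j) =
      X * derivative (legendrePoly (j+1)) - C (((j:ℕ):ℝ)+1) * legendrePoly (j+1) := by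
  cases j with
  | zero => simp [legendre0, legendre1]
  | succ k =>
    have := lemB k
    have hcast : ((k+1:ℕ):ℝ)+1 = ((k:ℕ):ℝ)+2 := by push_cast; ring
    rw [hcast]
    exact this

lemma keyDeriv (j : ℕ) :
    derivative (legendrePoly (j+2)) - derivative (legendrePoly j) =
      C (2*((j:ℕ):ℝ)+3) * legendrePoly (j+1) := by
  have h1 := lemA (j+1)
  have h2 := lemB' j
  have hcast : ((j+1:ℕ):ℝ) = ((j:ℕ):ℝ)+1 := by push_cast; ring
  rw [hcast] at h1
  simp only [Nat.cast_add, Nat.cast_one, map_mul, map_add, map_one, map_ofNat] at h1 h2 ⊢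
  linear_combination h1 - h2

lemma negStep (j : ℕ) :
    (legendrePoly (j+1)).eval (-1) = -((legendrePoly j).eval (-1)) := by
  cases j with
  | zero => simp [legendre0, legendre1]
  | succ k =>
    have h2 := congrArg (eval (-1)) (lemStar k)
    simp only [eval_add, eval_mul, eval_X, eval_C, eval_negone_iter_deriv k, mul_zero] at h2
    rw [h2]; ring


lemma expDeriv (z : ℂ) (y x : ℝ) :
    HasDerivAt (fun x : ℝ => Complex.exp (z*((y:ℂ)-x))) (Complex.exp (z*((y:ℂ)-x)) * (-z)) x := by
  have h0 : HasDerivAt (fun x : ℝ => ((x:ℝ):ℂ)) 1 x := by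
    simpa using (hasDerivAt_id x).ofReal_comp
  have h1 : HasDerivAt (fun x : ℝ => z*((y:ℂ)-x)) (-z) x := by
    simpa using ((hasDerivAt_const x ((y:ℂ))).sub h0).const_mul z
  simpa using h1.cexp

lemma contInt (z : ℂ) (y a b : ℝ) (q : ℝ[X]) :
    IntervalIntegrable (fun x : ℝ => Complex.exp (z*((y:ℂ)-x)) * ((q.eval x : ℝ) : ℂ))
      MeasureTheory.volume a b := by
  apply Continuous.intervalIntegrable
  fun_prop

lemma ibp (z : ℂ) (y : ℝ) (q : ℝ[X]) :
    (∫ x in (-1:ℝ)..y, Complex.exp (z * ((y : ℂ) - x)) * ((q.derivative.eval x : ℝ) : ℂ))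
    = ((q.eval y : ℝ) : ℂ) - Complex.exp (z * ((y:ℂ) + 1)) * ((q.eval (-1) : ℝ) : ℂ)
      + z * ∫ x in (-1:ℝ)..y, Complex.exp (z * ((y : ℂ) - x)) * ((q.eval x : ℝ) : ℂ) := by
  have hG : ∀ x ∈ Set.uIcc (-1:ℝ) y, HasDerivAt
      (fun x : ℝ => Complex.exp (z*((y:ℂ)-x)) * ((q.eval x : ℝ) : ℂ))
      (Complex.exp (z*((y:ℂ)-x)) * ((q.derivative.eval x : ℝ) : ℂ)
        - z * (Complex.exp (z*((y:ℂ)-x)) * ((q.eval x : ℝ) : ℂ))) x := by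
    intro x _
    have := (expDeriv z y x).mul ((q.hasDerivAt x).ofReal_comp)
    refine this.congr_deriv ?_
    ring
  have hInt : IntervalIntegrable
      (fun x : ℝ => Complex.exp (z*((y:ℂ)-x)) * ((q.derivative.eval x : ℝ) : ℂ)
        - z * (Complex.exp (z*((y:ℂ)-x)) * ((q.eval x : ℝ) : ℂ)))
      MeasureTheory.volume (-1) y := by
    apply Continuous.intervalIntegrable
    fun_prop
  have key := intervalIntegral.integral_eq_sub_of_hasDerivAt hG hInt
  rw [intervalIntegral.integral_sub (contInt z y _ _ _) ((contInt z y _ _ _).const_mul z),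
    intervalIntegral.integral_const_mul] at key
  have e1 : z * ((y:ℂ) - (y:ℝ)) = 0 := by push_cast; ring
  have e2 : z * ((y:ℂ) - ((-1:ℝ):ℂ)) = z * ((y:ℂ) + 1) := by push_cast; ring
  rw [e1, e2, Complex.exp_zero] at key
  linear_combination key

/-- Recurrence for the incomplete Legendre moments
r_i(z,y) = ∫_{−1}^y e^{z(y−x)} P_i(x) dx. -/
theorem incomplete_legendre_moment_recurrence (z : ℂ) (hz : z ≠ 0)
    (y : ℝ) (hy : y ∈ Set.Icc (-1 : ℝ) 1)
    (R : ℕ → ℂ)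
    (hR : ∀ i : ℕ, R i =
      ∫ x in (-1:ℝ)..y, Complex.exp (z * ((y : ℂ) - x)) *
        (((legendrePoly i).eval x : ℝ) : ℂ)) :
    (∀ i : ℕ, 1 ≤ i → R (i + 1) = ((2 * i + 1) / z) * R i + R (i - 1)
        - (1 / z) * ((((legendrePoly (i + 1)).eval y : ℝ) : ℂ)
          - (((legendrePoly (i - 1)).eval y : ℝ) : ℂ))) ∧
    R 0 = (Complex.exp (z * (1 + (y : ℂ))) - 1) / z ∧
    R 1 = (Complex.exp (z * (1 + (y : ℂ))) * (1 - z) - (1 + z * (y : ℂ))) / z ^ 2 := by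
  refine ⟨?_, ?_, ?_⟩
  · -- recurrence
    intro i hi
    obtain ⟨j, rfl⟩ : ∃ j, i = j + 1 := ⟨i - 1, (Nat.succ_pred_eq_of_pos hi).symm⟩
    set q : ℝ[X] := legendrePoly (j+2) - legendrePoly j with hqdef
    have hq' : q.derivative = C (2*((j:ℕ):ℝ)+3) * legendrePoly (j+1) := by
      rw [hqdef, derivative_sub]; exact keyDeriv j
    have hqneg : q.eval (-1) = 0 := by
      rw [hqdef, eval_sub, negStep (j+1), negStep j]; ring
    have hibp := ibp z y q
    have hL : (∫ x in (-1:ℝ)..y, Complex.exp (z * ((y : ℂ) - x)) *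
        ((q.derivative.eval x : ℝ) : ℂ)) = (2*((j:ℕ):ℂ)+3) * R (j+1) := by
      rw [hq']
      have : ∀ x : ℝ, Complex.exp (z * ((y : ℂ) - x)) *
          (((C (2*((j:ℕ):ℝ)+3) * legendrePoly (j+1)).eval x : ℝ) : ℂ)
          = (2*((j:ℕ):ℂ)+3) * (Complex.exp (z * ((y : ℂ) - x)) *
            (((legendrePoly (j+1)).eval x : ℝ) : ℂ)) := by
        intro x
        rw [eval_mul, eval_C]
        push_cast
        ring
      rw [intervalIntegral.integral_congr (fun x _ => this x),
        intervalIntegral.integral_const_mul, ← hR]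
    have hRS : (∫ x in (-1:ℝ)..y, Complex.exp (z * ((y : ℂ) - x)) *
        ((q.eval x : ℝ) : ℂ)) = R (j+2) - R j := by
      have : ∀ x : ℝ, Complex.exp (z * ((y : ℂ) - x)) * ((q.eval x : ℝ) : ℂ)
          = Complex.exp (z * ((y : ℂ) - x)) * (((legendrePoly (j+2)).eval x : ℝ) : ℂ)
            - Complex.exp (z * ((y : ℂ) - x)) * (((legendrePoly j).eval x : ℝ) : ℂ) := by
        intro x
        rw [hqdef, eval_sub]
        push_cast
        ring
      rw [intervalIntegral.integral_congr (fun x _ => this x),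
        intervalIntegral.integral_sub (contInt z y _ _ _) (contInt z y _ _ _), ← hR, ← hR]
    rw [hL, hqneg, hRS] at hibp
    have hqy : ((q.eval y : ℝ) : ℂ) = (((legendrePoly (j+2)).eval y : ℝ) : ℂ)
        - (((legendrePoly j).eval y : ℝ) : ℂ) := by
      rw [hqdef, eval_sub]; push_cast; ring
    rw [hqy] at hibp
    simp only [Complex.ofReal_zero, mul_zero, sub_zero] at hibp
    have hj1 : j + 1 - 1 = j := rfl
    have hj2 : j + 1 + 1 = j + 2 := rfl
    rw [hj1, hj2]
    have hcast : ((j+1 : ℕ) : ℂ) = (j:ℂ) + 1 := by push_cast; ring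
    push_cast
    field_simp
    linear_combination -hibp
  · -- R 0
    have h0 : R 0 = ∫ x in (-1:ℝ)..y, Complex.exp (z * ((y : ℂ) - x)) := by
      rw [hR 0]
      refine intervalIntegral.integral_congr (fun x _ => ?_)
      simp [legendre0]
    have hG : ∀ x ∈ Set.uIcc (-1:ℝ) y, HasDerivAt
        (fun x : ℝ => Complex.exp (z*((y:ℂ)-x)) * (-1/z))
        (Complex.exp (z*((y:ℂ)-x))) x := by
      intro x _
      have := (expDeriv z y x).mul_const (-1/z)
      refine this.congr_deriv ?_
      field_simp
    have hInt : IntervalIntegrable (fun x : ℝ => Complex.exp (z*((y:ℂ)-x)))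
        MeasureTheory.volume (-1) y := by
      apply Continuous.intervalIntegrable; fun_prop
    have key := intervalIntegral.integral_eq_sub_of_hasDerivAt hG hInt
    rw [h0, key]
    have e1 : z * ((y:ℂ) - (y:ℝ)) = 0 := by norm_num
    have e2 : z * ((y:ℂ) - ((-1:ℝ):ℂ)) = z * (1 + (y:ℂ)) := by push_cast; ring
    rw [e1, e2, Complex.exp_zero]
    field_simp
    ring
  · -- R 1
    have h1 : R 1 = ∫ x in (-1:ℝ)..y, Complex.exp (z * ((y : ℂ) - x)) * ((x:ℝ):ℂ) := by
      rw [hR 1]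
      refine intervalIntegral.integral_congr (fun x _ => ?_)
      simp [legendre1]
    have hG : ∀ x ∈ Set.uIcc (-1:ℝ) y, HasDerivAt
        (fun x : ℝ => Complex.exp (z*((y:ℂ)-x)) * (-(x:ℂ)/z - 1/z^2))
        (Complex.exp (z*((y:ℂ)-x)) * ((x:ℝ):ℂ)) x := by
      intro x _
      have h0 : HasDerivAt (fun x : ℝ => ((x:ℝ):ℂ)) 1 x := by
        simpa using (hasDerivAt_id x).ofReal_comp
      have hlin : HasDerivAt (fun x : ℝ => (-(x:ℂ)/z - 1/z^2)) (-1/z) x := by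
        have := ((h0.neg).div_const z).sub_const (1/z^2)
        exact this
      have := (expDeriv z y x).mul hlin
      refine this.congr_deriv ?_
      field_simp
      ring
    have hInt : IntervalIntegrable (fun x : ℝ => Complex.exp (z*((y:ℂ)-x)) * ((x:ℝ):ℂ))
        MeasureTheory.volume (-1) y := by
      apply Continuous.intervalIntegrable; fun_prop
    have key := intervalIntegral.integral_eq_sub_of_hasDerivAt hG hInt
    rw [h1, key]
    have e1 : z * ((y:ℂ) - (y:ℝ)) = 0 := by norm_num
    have e2 : z * ((y:ℂ) - ((-1:ℝ):ℂ)) = z * (1 + (y:ℂ)) := by push_cast; ring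
    rw [e1, e2, Complex.exp_zero]
    have hz2 : z^2 ≠ 0 := pow_ne_zero _ hz
    field_simp
    push_cast
    ring
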